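/- Let a = (a_0, …, a_{2m}) be a distinguished type-C u-symbol and a' = i(a) = (a'_0, …, a'_{2m}) the corresponding symbol. If 0 ≤ k < l ≤ 2m and k and l belong to distinct parts of a, then a'_k < a'_l. -/
import Mathlib


open scoped Classical

/-- The map `i` from type-C u-symbols to type-C symbols: the `j`-th entry is
`a j - ⌈j/2⌉`. -/
def mapC (a : ℕ → ℕ) : ℕ → ℕ := fun j => a j - (j + 1) / 2

/-- A type-C u-symbol of rank `n` (with `2m+1` entries, indexed `0,…,2m`). -/
def IsUSymC (n m : ℕ) (a : ℕ → ℕ) : Prop :=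
  1 ≤ a 1 ∧ (∀ i, i + 2 ≤ 2 * m → a i + 2 ≤ a (i + 2)) ∧
    (∑ j ∈ Finset.range (2 * m + 1), a j) = n + 2 * m ^ 2 + m

/-- The u-symbol `a` is distinguished: its entries are nondecreasing. -/
def DistC (m : ℕ) (a : ℕ → ℕ) : Prop := ∀ i, i + 1 ≤ 2 * m → a i ≤ a (i + 1)

/-- `k` is an isolated point of the u-symbol `a`: the `k`-th entry of `i(a)` differs
from every other entry of `i(a)`. -/
def IsIsolC (m : ℕ) (a : ℕ → ℕ) (k : ℕ) : Prop :=
  k ≤ 2 * m ∧ ∀ l ≤ 2 * m, l ≠ k → mapC a l ≠ mapC a k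

/-- `[k,l]` is a ladder of `a`: the entries `a k, …, a l` are `c, c+1, …, c+l-k`,
with `a (k-1) < c - 1` if `k > 0` and `a (l+1) > c + (l-k) + 1` if `l < 2m`. -/
def IsLadderC (m : ℕ) (a : ℕ → ℕ) (k l : ℕ) : Prop :=
  k ≤ l ∧ l ≤ 2 * m ∧ (∀ j, k ≤ j → j ≤ l → a j = a k + (j - k)) ∧
    (0 < k → a (k - 1) + 1 < a k) ∧ (l < 2 * m → a l + 1 < a (l + 1))

/-- `[k,l]` is a staircase of `a`: `l-k+1` is even and the entries `a k, …, a l` are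
`c, c, c+2, c+2, …, c+l-k-1, c+l-k-1`, with `a (k-2) < c - 2` if `k > 1` and
`a (l+2) > c + (l-k) + 1` if `l < 2m - 1`. -/
def IsStairC (m : ℕ) (a : ℕ → ℕ) (k l : ℕ) : Prop :=
  k ≤ l ∧ l ≤ 2 * m ∧ (l - k) % 2 = 1 ∧
    (∀ j, k ≤ j → j ≤ l → a j = a k + 2 * ((j - k) / 2)) ∧
    (1 < k → a (k - 2) + 2 < a k) ∧ (l + 2 ≤ 2 * m → a l + 2 < a (l + 2))

/-- A part is a ladder or a staircase. -/
def IsPartC (m : ℕ) (a : ℕ → ℕ) (k l : ℕ) : Prop :=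
  IsLadderC m a k l ∨ IsStairC m a k l

section Helpers

variable {m p q k j p' q' : ℕ} {a : ℕ → ℕ}

private lemma chainC (h2 : ∀ i, i + 2 ≤ 2 * m → a i + 2 ≤ a (i + 2)) :
    ∀ t j, j + 2 * t ≤ 2 * m → a j + 2 * t ≤ a (j + 2 * t) := by
  intro t
  induction t with
  | zero => intro j _; simp
  | succ t ih =>
    intro j h
    have h1 := ih j (by omega)
    have h3 := h2 (j + 2 * t) (by omega)
    have e : j + 2 * (t + 1) = j + 2 * t + 2 := by ring
    rw [e]
    omega

private lemma pair_left (h2 : ∀ i, i + 2 ≤ 2 * m → a i + 2 ≤ a (i + 2))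
    (hpq : IsPartC m a p q) (hpk : p ≤ k) (hkq : k ≤ q)
    (heq : a (k + 1) = a k) (hk2 : k + 1 ≤ 2 * m) :
    IsStairC m a p q ∧ (k - p) % 2 = 0 := by
  rcases hpq with hL | hS
  · exfalso
    obtain ⟨h1a, h1b, hpat, hbot, htop⟩ := hL
    rcases eq_or_lt_of_le hkq with heqq | hlt
    · have ht := htop (by omega)
      have e1 : a q = a k := by rw [heqq]
      have e2 : a (q + 1) = a (k + 1) := by rw [heqq]
      omega
    · have e1 := hpat k hpk (by omega)
      have e2 := hpat (k + 1) (by omega) (by omega)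
      omega
  · refine ⟨hS, ?_⟩
    by_contra hpar
    obtain ⟨h1a, h1b, hodd, hpat, hbot, htop⟩ := hS
    have hp1 : p + 1 ≤ k := by omega
    have e1 := hpat k hpk hkq
    have e2 := hpat (k - 1) (by omega) (by omega)
    have h3 := h2 (k - 1) (by omega)
    have hh : k - 1 + 2 = k + 1 := by omega
    rw [hh] at h3
    omega

private lemma pair_right (h2 : ∀ i, i + 2 ≤ 2 * m → a i + 2 ≤ a (i + 2))
    (hpq : IsPartC m a p q) (hpk : p ≤ k + 1) (hkq : k + 1 ≤ q)
    (heq : a (k + 1) = a k) :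
    IsStairC m a p q ∧ (k + 1 - p) % 2 = 1 := by
  rcases hpq with hL | hS
  · exfalso
    obtain ⟨h1a, h1b, hpat, hbot, htop⟩ := hL
    rcases eq_or_lt_of_le hpk with heqp | hlt
    · have hb := hbot (by omega)
      have hh : p - 1 = k := by omega
      rw [hh] at hb
      have e1 : a p = a (k + 1) := by rw [heqp]
      omega
    · have e1 := hpat k (by omega) (by omega)
      have e2 := hpat (k + 1) (by omega) hkq
      omega
  · refine ⟨hS, ?_⟩
    by_contra hpar
    obtain ⟨h1a, h1b, hodd, hpat, hbot, htop⟩ := hS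
    rcases eq_or_lt_of_le hpk with heqp | hlt
    · -- p = k + 1, and q ≥ p + 1 since (q - p) is odd
      have e0 := hpat (k + 1) (by omega) hkq
      have e1 := hpat (k + 2) (by omega) (by omega)
      have h3 := h2 k (by omega)
      omega
    · have e1 := hpat k (by omega) (by omega)
      have e2 := hpat (k + 1) (by omega) hkq
      omega

private lemma step1_left (h2 : ∀ i, i + 2 ≤ 2 * m → a i + 2 ≤ a (i + 2))
    (hpq : IsPartC m a p q) (hpk : p ≤ k) (hkq : k ≤ q)
    (heq : a (k + 1) = a k + 1) (hk2 : k + 1 ≤ 2 * m) :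
    IsLadderC m a p q ∧ k < q := by
  rcases hpq with hL | hS
  · refine ⟨hL, ?_⟩
    rcases eq_or_lt_of_le hkq with heqq | hlt
    · exfalso
      have ht := hL.2.2.2.2 (by omega)
      have e1 : a q = a k := by rw [heqq]
      have e2 : a (q + 1) = a (k + 1) := by rw [heqq]
      omega
    · exact hlt
  · exfalso
    obtain ⟨h1a, h1b, hodd, hpat, hbot, htop⟩ := hS
    rcases eq_or_lt_of_le hkq with heqq | hlt
    · have hp1 : p + 1 ≤ k := by omega
      have e1 := hpat k hpk hkq
      have e2 := hpat (k - 1) (by omega) (by omega)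
      have h3 := h2 (k - 1) (by omega)
      have hh : k - 1 + 2 = k + 1 := by omega
      rw [hh] at h3
      omega
    · have e1 := hpat k hpk (by omega)
      have e2 := hpat (k + 1) (by omega) (by omega)
      omega

private lemma step1_right (h2 : ∀ i, i + 2 ≤ 2 * m → a i + 2 ≤ a (i + 2))
    (hpq : IsPartC m a p q) (hpk : p ≤ k + 1) (hkq : k + 1 ≤ q)
    (heq : a (k + 1) = a k + 1) :
    IsLadderC m a p q ∧ p ≤ k := by
  rcases hpq with hL | hS
  · refine ⟨hL, ?_⟩
    rcases eq_or_lt_of_le hpk with heqp | hlt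
    · exfalso
      have hb := hL.2.2.2.1 (by omega)
      have hh : p - 1 = k := by omega
      rw [hh] at hb
      have e1 : a p = a (k + 1) := by rw [heqp]
      omega
    · omega
  · exfalso
    obtain ⟨h1a, h1b, hodd, hpat, hbot, htop⟩ := hS
    rcases eq_or_lt_of_le hpk with heqp | hlt
    · have e0 := hpat (k + 1) (by omega) hkq
      have e1 := hpat (k + 2) (by omega) (by omega)
      have h3 := h2 k (by omega)
      omega
    · have e1 := hpat k (by omega) (by omega)
      have e2 := hpat (k + 1) (by omega) hkq
      omega

private lemma ladder_unique (hL1 : IsLadderC m a p q) (hL2 : IsLadderC m a p' q')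
    (hj1 : p ≤ j) (hj2 : j ≤ q) (hj3 : p' ≤ j) (hj4 : j ≤ q') :
    p = p' ∧ q = q' := by
  obtain ⟨h1a, h1b, h1pat, h1bot, h1top⟩ := hL1
  obtain ⟨h2a, h2b, h2pat, h2bot, h2top⟩ := hL2
  have hp : p = p' := by
    by_contra hne
    rcases Nat.lt_or_ge p p' with h | h
    · have hb := h2bot (by omega)
      have e1 := h1pat p' (by omega) (by omega)
      have e2 := h1pat (p' - 1) (by omega) (by omega)
      omega
    · have h' : p' < p := by omega
      have hb := h1bot (by omega)
      have e1 := h2pat p (by omega) (by omega)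
      have e2 := h2pat (p - 1) (by omega) (by omega)
      omega
  have hq : q = q' := by
    by_contra hne
    rcases Nat.lt_or_ge q q' with h | h
    · have ht := h1top (by omega)
      have e1 := h2pat q (by omega) (by omega)
      have e2 := h2pat (q + 1) (by omega) (by omega)
      omega
    · have h' : q' < q := by omega
      have ht := h2top (by omega)
      have e1 := h1pat q' (by omega) (by omega)
      have e2 := h1pat (q' + 1) (by omega) (by omega)
      omega
  exact ⟨hp, hq⟩

private lemma stair_unique (hS1 : IsStairC m a p q) (hS2 : IsStairC m a p' q')
    (hj1 : p ≤ j) (hj2 : j ≤ q) (hj3 : p' ≤ j) (hj4 : j ≤ q')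
    (hpar : (j - p) % 2 = (j - p') % 2) :
    p = p' ∧ q = q' := by
  obtain ⟨h1a, h1b, h1o, h1pat, h1bot, h1top⟩ := hS1
  obtain ⟨h2a, h2b, h2o, h2pat, h2bot, h2top⟩ := hS2
  have hp : p = p' := by
    by_contra hne
    rcases Nat.lt_or_ge p p' with h | h
    · have hb := h2bot (by omega)
      have e1 := h1pat p' (by omega) (by omega)
      have e2 := h1pat (p' - 2) (by omega) (by omega)
      omega
    · have h' : p' < p := by omega
      have hb := h1bot (by omega)
      have e1 := h2pat p (by omega) (by omega)
      have e2 := h2pat (p - 2) (by omega) (by omega)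
      omega
  have hq : q = q' := by
    by_contra hne
    rcases Nat.lt_or_ge q q' with h | h
    · have ht := h1top (by omega)
      have e1 := h2pat q (by omega) (by omega)
      have e2 := h2pat (q + 2) (by omega) (by omega)
      omega
    · have h' : q' < q := by omega
      have ht := h2top (by omega)
      have e1 := h1pat q' (by omega) (by omega)
      have e2 := h1pat (q' + 2) (by omega) (by omega)
      omega
  exact ⟨hp, hq⟩

private lemma lbC (ha1 : 1 ≤ a 1)
    (h2 : ∀ i, i + 2 ≤ 2 * m → a i + 2 ≤ a (i + 2)) :
    ∀ j, j ≤ 2 * m → j ≤ a j := by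
  intro j hj
  rcases Nat.even_or_odd j with ⟨t, ht⟩ | ⟨t, ht⟩
  · have hc := chainC h2 t 0 (by omega)
    have e : 0 + 2 * t = j := by omega
    rw [e] at hc
    omega
  · have hc := chainC h2 t 1 (by omega)
    have e : 1 + 2 * t = j := by omega
    rw [e] at hc
    omega

end Helpers

/-- If `k < l` belong to distinct parts of the distinguished type-C u-symbol `a`,
then the `k`-th entry of `i(a)` is strictly smaller than the `l`-th entry. -/
theorem stmt4 (n m : ℕ) (hn : 1 ≤ n) (hm : 1 ≤ m) (a : ℕ → ℕ)
    (ha : IsUSymC n m a) (hdist : DistC m a)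
    (k l : ℕ) (hkl : k < l) (hl : l ≤ 2 * m)
    (hparts : ∃ k₁ l₁ k₂ l₂, IsPartC m a k₁ l₁ ∧ IsPartC m a k₂ l₂ ∧
      k₁ ≤ k ∧ k ≤ l₁ ∧ k₂ ≤ l ∧ l ≤ l₂ ∧ (k₁, l₁) ≠ (k₂, l₂)) :
    mapC a k < mapC a l := by
  obtain ⟨ha1, h2, hsum⟩ := ha
  obtain ⟨k₁, l₁, k₂, l₂, hP1, hP2, hq1, hq2, hq3, hq4, hne⟩ := hparts
  have hk2m : k ≤ 2 * m := by omega
  have key : a k + (l + 1) / 2 < a l + (k + 1) / 2 := by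
    by_cases hA : l = k + 1 ∧ a l = a k
    · exfalso
      obtain ⟨rfl, heq⟩ := hA
      obtain ⟨hs1, hpar1⟩ := pair_left h2 hP1 hq1 hq2 heq hl
      obtain ⟨hs2, hpar2⟩ := pair_right h2 hP2 hq3 hq4 heq
      have hk₂k : k₂ ≤ k := by omega
      obtain ⟨hp, hq⟩ := stair_unique hs1 hs2 hq1 hq2 hk₂k (by omega) (by omega)
      exact hne (by rw [hp, hq])
    · by_cases hB : l = k + 1 ∧ a l = a k + 1
      · exfalso
        obtain ⟨rfl, heq⟩ := hB
        obtain ⟨hl1, -⟩ := step1_left h2 hP1 hq1 hq2 heq hl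
        obtain ⟨hl2, hk₂k⟩ := step1_right h2 hP2 hq3 hq4 heq
        obtain ⟨hp, hq⟩ := ladder_unique hl1 hl2 hq1 hq2 hk₂k (by omega)
        exact hne (by rw [hp, hq])
      · by_cases hC : l = k + 3 ∧ a l = a k + 2
        · exfalso
          obtain ⟨rfl, heq⟩ := hC
          have m1 := hdist k (by omega)
          have m2 := hdist (k + 1) (by omega)
          have m3 := hdist (k + 2) (by omega)
          have c1 := h2 (k + 1) (by omega)
          have c2 := h2 k (by omega)
          rw [show k + 1 + 1 = k + 2 by omega] at m2
          rw [show k + 2 + 1 = k + 3 by omega] at m3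
          rw [show k + 1 + 2 = k + 3 by omega] at c1
          have e1 : a (k + 1) = a k := by omega
          have e2 : a (k + 2 + 1) = a (k + 2) := by
            rw [show k + 2 + 1 = k + 3 by omega]
            omega
          obtain ⟨hs1, hpar1⟩ := pair_left h2 hP1 hq1 hq2 e1 (by omega)
          obtain ⟨hs2, hpar2⟩ :=
            pair_right h2 hP2 (by omega : k₂ ≤ k + 2 + 1) (by omega) e2
          by_cases hc : k₂ = k + 2
          · have hb := hs2.2.2.2.2.1 (by omega)
            have hh : k₂ - 2 = k := by omega
            rw [hh, hc] at hb
            omega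
          · have hk₂k : k₂ ≤ k := by omega
            obtain ⟨hp, hq⟩ := stair_unique hs1 hs2 hq1 hq2 hk₂k (by omega) (by omega)
            exact hne (by rw [hp, hq])
        · -- arithmetic cases
          have hmono1 : a k ≤ a (k + 1) := hdist k (by omega)
          rcases Nat.even_or_odd (l - k) with ⟨t, ht⟩ | ⟨t, ht⟩
          · have hc := chainC h2 t k (by omega)
            have e : k + 2 * t = l := by omega
            rw [e] at hc
            omega
          · have hc := chainC h2 t (k + 1) (by omega)
            have e : k + 1 + 2 * t = l := by omega
            rw [e] at hc
            by_cases h0 : l = k + 1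
            · subst h0
              have hA' : a (k + 1) ≠ a k := fun h => hA ⟨rfl, h⟩
              have hB' : a (k + 1) ≠ a k + 1 := fun h => hB ⟨rfl, h⟩
              omega
            · by_cases h3 : l = k + 3
              · subst h3
                have hC' : a (k + 3) ≠ a k + 2 := fun h => hC ⟨rfl, h⟩
                omega
              · omega
  have hlb : k ≤ a k := lbC ha1 h2 k hk2m
  show a k - (k + 1) / 2 < a l - (l + 1) / 2
  omega
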